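/- Let D ⊆ {0,1}^n with |D| = 2^{nδ} for 0 ≤ δ < 1, let M be uniform on {0,1}^n, and let X_W be the eavesdropper's single-link observation under the modified one-time pad (X_W = M if M ∈ D; otherwise X_W uniform on D^c, independent of M given M ∉ D). Then I(M; X_W) = H₂(2^{nδ}/2^n) + (2^{nδ}/2^n)·log₂(2^{nδ}), where H₂ is the binary entropy function; in particular I(M; X_W) → 0 as n → ∞ for fixed δ < 1. -/

import Mathlib

open Finset Real Filter

/-- Mutual information (in bits) computed from a joint pmf on `α × β`. -/
noncomputable def mutualInfo {α β : Type*} [Fintype α] [Fintype β] (p : α × β → ℝ) : ℝ :=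
  ∑ m : α, ∑ x : β,
    p (m, x) * Real.logb 2 (p (m, x) / ((∑ y, p (m, y)) * (∑ m', p (m', x))))

/-- Binary entropy function (in bits). -/
noncomputable def binEnt (p : ℝ) : ℝ :=
  -(p * Real.logb 2 p) - (1 - p) * Real.logb 2 (1 - p)

/-- Joint pmf of (message, single-link observation) for the modified one-time
pad: `M` uniform on `{0,1}^n`; if `M ∈ D` the observation equals `M`, otherwise
the observation is uniform on `Dᶜ`, independent of `M`. -/
noncomputable def jointOTP (n d : ℕ) (D : Finset (Fin n → Bool)) :
    (Fin n → Bool) × (Fin n → Bool) → ℝ := fun mx =>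
  if mx.1 ∈ D then (if mx.2 = mx.1 then (1 : ℝ) / 2 ^ n else 0)
  else (if mx.2 ∈ D then 0 else ((1 : ℝ) / 2 ^ n) * (1 / ((2 : ℝ) ^ n - 2 ^ d)))


lemma binEnt_cont : Continuous binEnt := by
  have h : Continuous fun x : ℝ => x * Real.log x := Real.continuous_mul_log
  have : binEnt = fun p => -((p * Real.log p) / Real.log 2) -
      (((1-p) * Real.log (1-p)) / Real.log 2) := by
    funext p; simp [binEnt, Real.logb, div_eq_mul_inv]; ring
  rw [this]
  fun_prop


lemma limit_aux (δ : ℝ) (h0 : 0 ≤ δ) (h1 : δ < 1) :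
    Tendsto (fun N : ℕ =>
        binEnt ((2 : ℝ) ^ (δ * N) / (2 : ℝ) ^ (N : ℝ)) +
          ((2 : ℝ) ^ (δ * N) / (2 : ℝ) ^ (N : ℝ)) *
            Real.logb 2 ((2 : ℝ) ^ (δ * N)))
      atTop (nhds 0) := by
  set r : ℝ := (2 : ℝ) ^ (δ - 1) with hr
  have hr0 : 0 < r := Real.rpow_pos_of_pos two_pos _
  have hr1 : r < 1 := Real.rpow_lt_one_of_one_lt_of_neg one_lt_two (by linarith)
  have hq : ∀ N : ℕ, (2 : ℝ) ^ (δ * N) / (2 : ℝ) ^ (N : ℝ) = r ^ N := by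
    intro N
    rw [← Real.rpow_natCast r N, hr, ← Real.rpow_mul (by norm_num : (0:ℝ) ≤ 2),
      ← Real.rpow_sub two_pos]
    ring_nf
  have hlogb : ∀ N : ℕ, Real.logb 2 ((2 : ℝ) ^ (δ * N)) = δ * N :=
    fun N => Real.logb_rpow (by norm_num) (by norm_num)
  simp only [hq, hlogb]
  have t1 : Tendsto (fun N : ℕ => binEnt (r ^ N)) atTop (nhds 0) := by
    have : Tendsto (fun N : ℕ => r ^ N) atTop (nhds 0) :=
      tendsto_pow_atTop_nhds_zero_of_lt_one hr0.le hr1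
    have := (binEnt_cont.tendsto 0).comp this
    simpa [binEnt, Function.comp_def] using this
  have t2 : Tendsto (fun N : ℕ => r ^ N * (δ * N)) atTop (nhds 0) := by
    have h := (summable_pow_mul_geometric_of_norm_lt_one 1
      (r := r) (by rw [Real.norm_eq_abs, abs_of_pos hr0]; exact hr1)).tendsto_atTop_zero
    have := h.const_mul δ
    simp only [pow_one, mul_zero] at this
    convert this using 2 with N
    ring
  simpa using t1.add t2

private lemma part1aux (n d : ℕ) (hd : d < n) (D : Finset (Fin n → Bool))
    (hD : D.card = 2 ^ d) :
    mutualInfo (jointOTP n d D) =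
        binEnt ((2 : ℝ) ^ d / 2 ^ n) + ((2 : ℝ) ^ d / 2 ^ n) * Real.logb 2 (2 ^ d) := by
  have hcard : Fintype.card (Fin n → Bool) = 2 ^ n := by simp
  set N : ℝ := (2 : ℝ) ^ n with hN
  set K : ℝ := (2 : ℝ) ^ d with hK
  have hKN : K < N := by apply pow_lt_pow_right₀ one_lt_two hd
  have hN0 : (0 : ℝ) < N := by positivity
  have hK0 : (0 : ℝ) < K := by positivity
  have hNK : (0 : ℝ) < N - K := by linarith
  have hcardc : ((Dᶜ).card : ℝ) = N - K := by
    rw [Finset.card_compl, hD, hcard,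
      Nat.cast_sub (Nat.pow_le_pow_right (by norm_num) hd.le)]
    push_cast
    rfl
  have hcardD : ((D).card : ℝ) = K := by rw [hD]; push_cast; rfl
  set c : ℝ := (1 / N) * (1 / (N - K)) with hc
  have margM : ∀ m, ∑ y, jointOTP n d D (m, y) = 1 / N := by
    intro m
    by_cases hm : m ∈ D
    · simp only [jointOTP, if_pos hm]
      rw [Finset.sum_ite_eq' univ m (fun _ => (1:ℝ)/2^n)]
      simp [hN]
    · simp only [jointOTP, if_neg hm]
      rw [← Finset.sum_add_sum_compl D]
      have h1 : ∑ x ∈ D, (if x ∈ D then (0:ℝ) else ((1:ℝ)/2^n)*(1/((2:ℝ)^n - 2^d))) = 0 :=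
        Finset.sum_eq_zero fun x hx => if_pos hx
      have h2 : ∑ x ∈ Dᶜ, (if x ∈ D then (0:ℝ) else ((1:ℝ)/2^n)*(1/((2:ℝ)^n - 2^d)))
          = (N - K) * c := by
        rw [Finset.sum_congr rfl (fun x hx => if_neg (Finset.mem_compl.mp hx)),
          Finset.sum_const, nsmul_eq_mul, hcardc]
      rw [h1, h2, zero_add, hc]
      field_simp
  have margX : ∀ x, ∑ m', jointOTP n d D (m', x) = 1 / N := by
    intro x
    by_cases hx : x ∈ D
    · rw [← Finset.sum_add_sum_compl D]
      have h1 : ∑ m' ∈ D, jointOTP n d D (m', x) = 1 / N := by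
        have : ∀ m' ∈ D, jointOTP n d D (m', x) =
            if x = m' then (1:ℝ)/2^n else 0 := by
          intro m' hm'; simp only [jointOTP, if_pos hm']
        rw [Finset.sum_congr rfl this, Finset.sum_ite_eq D x (fun _ => (1:ℝ)/2^n),
          if_pos hx]
      have h2 : ∑ m' ∈ Dᶜ, jointOTP n d D (m', x) = 0 := by
        apply Finset.sum_eq_zero
        intro m' hm'
        simp only [jointOTP, if_neg (Finset.mem_compl.mp hm'), if_pos hx]
      rw [h1, h2, add_zero]
    · rw [← Finset.sum_add_sum_compl D]
      have h1 : ∑ m' ∈ D, jointOTP n d D (m', x) = 0 := by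
        apply Finset.sum_eq_zero
        intro m' hm'
        have hxm : x ≠ m' := by rintro rfl; exact hx hm'
        simp only [jointOTP, if_pos hm', if_neg hxm]
      have h2 : ∑ m' ∈ Dᶜ, jointOTP n d D (m', x) = (N - K) * c := by
        have : ∀ m' ∈ Dᶜ, jointOTP n d D (m', x) =
            ((1:ℝ)/2^n)*(1/((2:ℝ)^n - 2^d)) := by
          intro m' hm'
          simp only [jointOTP, if_neg (Finset.mem_compl.mp hm'), if_neg hx]
        rw [Finset.sum_congr rfl this, Finset.sum_const, nsmul_eq_mul, hcardc]
      rw [h1, h2, zero_add, hc]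
      field_simp
  -- main computation
  have hlogN : Real.logb 2 N = n := by
    rw [hN, Real.logb_pow]
    simp
  have hlogK : Real.logb 2 K = d := by
    rw [hK, Real.logb_pow]
    simp
  unfold mutualInfo
  simp only [margM, margX]
  rw [← Finset.sum_add_sum_compl D]
  have hD1 : ∑ m ∈ D, ∑ x, jointOTP n d D (m, x) *
      Real.logb 2 (jointOTP n d D (m, x) / (1/N * (1/N))) = K * ((1/N) * n) := by
    have inner : ∀ m ∈ D, ∑ x, jointOTP n d D (m, x) *
        Real.logb 2 (jointOTP n d D (m, x) / (1/N * (1/N))) = (1/N) * n := by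
      intro m hm
      simp only [jointOTP, if_pos hm]
      have : ∀ x : Fin n → Bool,
          (if x = m then (1:ℝ)/2^n else 0) *
            Real.logb 2 ((if x = m then (1:ℝ)/2^n else 0) / (1/N * (1/N))) =
          if x = m then (1/N) * Real.logb 2 ((1/N) / (1/N * (1/N))) else 0 := by
        intro x; split_ifs with h
        · rfl
        · simp
      rw [Finset.sum_congr rfl (fun x _ => this x),
        Finset.sum_ite_eq' univ m, if_pos (Finset.mem_univ m)]
      have hv : (1/N) / (1/N * (1/N)) = N := by field_simp
      rw [hv, hlogN]
    rw [Finset.sum_congr rfl inner, Finset.sum_const, nsmul_eq_mul, hcardD]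
  have hD2 : ∑ m ∈ Dᶜ, ∑ x, jointOTP n d D (m, x) *
      Real.logb 2 (jointOTP n d D (m, x) / (1/N * (1/N))) =
      (N - K) * ((N - K) * (c * Real.logb 2 (N / (N - K)))) := by
    have inner : ∀ m ∈ Dᶜ, ∑ x, jointOTP n d D (m, x) *
        Real.logb 2 (jointOTP n d D (m, x) / (1/N * (1/N))) =
        (N - K) * (c * Real.logb 2 (N / (N - K))) := by
      intro m hm
      have hm' := Finset.mem_compl.mp hm
      simp only [jointOTP, if_neg hm']
      rw [← Finset.sum_add_sum_compl D]
      have h1 : ∑ x ∈ D, (if x ∈ D then (0:ℝ) else ((1:ℝ)/2^n)*(1/((2:ℝ)^n - 2^d))) *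
          Real.logb 2 ((if x ∈ D then (0:ℝ) else ((1:ℝ)/2^n)*(1/((2:ℝ)^n - 2^d)))
            / (1/N * (1/N))) = 0 := by
        apply Finset.sum_eq_zero
        intro x hx
        rw [if_pos hx, zero_mul]
      have h2 : ∑ x ∈ Dᶜ, (if x ∈ D then (0:ℝ) else ((1:ℝ)/2^n)*(1/((2:ℝ)^n - 2^d))) *
          Real.logb 2 ((if x ∈ D then (0:ℝ) else ((1:ℝ)/2^n)*(1/((2:ℝ)^n - 2^d)))
            / (1/N * (1/N))) =
          (N - K) * (c * Real.logb 2 (N / (N - K))) := by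
        have hcN : c / (1/N * (1/N)) = N / (N - K) := by
          rw [hc]; field_simp
        have : ∀ x ∈ Dᶜ, (if x ∈ D then (0:ℝ) else ((1:ℝ)/2^n)*(1/((2:ℝ)^n - 2^d))) *
            Real.logb 2 ((if x ∈ D then (0:ℝ) else ((1:ℝ)/2^n)*(1/((2:ℝ)^n - 2^d)))
              / (1/N * (1/N))) = c * Real.logb 2 (N / (N - K)) := by
          intro x hx
          rw [if_neg (Finset.mem_compl.mp hx)]
          show c * Real.logb 2 (c / (1/N * (1/N))) = _
          rw [hcN]
        rw [Finset.sum_congr rfl this, Finset.sum_const, nsmul_eq_mul, hcardc]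
      rw [h1, h2, zero_add]
    rw [Finset.sum_congr rfl inner, Finset.sum_const, nsmul_eq_mul, hcardc]
  rw [hD1, hD2]
  -- final algebra
  have hlogdiv : Real.logb 2 (N / (N - K)) = n - Real.logb 2 (N - K) := by
    rw [Real.logb_div hN0.ne' hNK.ne', hlogN]
  have hq : Real.logb 2 (K / N) = d - n := by
    rw [Real.logb_div hK0.ne' hN0.ne', hlogN, hlogK]
  have h1q : (1 : ℝ) - K / N = (N - K) / N := by field_simp
  have hlog1q : Real.logb 2 ((N - K) / N) = Real.logb 2 (N - K) - n := by
    rw [Real.logb_div hNK.ne' hN0.ne', hlogN]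
  unfold binEnt
  rw [hq, h1q, hlog1q, hlogdiv, hlogK, hc]
  field_simp
  ring

/-- For the modified one-time pad with `|D| = 2^{nδ}` (here `2^d`, `δ = d/n`),
`I(M; X_W) = H₂(2^{nδ}/2^n) + (2^{nδ}/2^n)·log₂(2^{nδ})`; in particular, for
fixed `0 ≤ δ < 1` this quantity tends to `0` as `n → ∞`. -/
theorem stmt16 (n d : ℕ) (hd : d < n) (D : Finset (Fin n → Bool))
    (hD : D.card = 2 ^ d) :
    mutualInfo (jointOTP n d D) =
        binEnt ((2 : ℝ) ^ d / 2 ^ n) + ((2 : ℝ) ^ d / 2 ^ n) * Real.logb 2 (2 ^ d) ∧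
      ∀ δ : ℝ, 0 ≤ δ → δ < 1 →
        Tendsto (fun N : ℕ =>
            binEnt ((2 : ℝ) ^ (δ * N) / (2 : ℝ) ^ (N : ℝ)) +
              ((2 : ℝ) ^ (δ * N) / (2 : ℝ) ^ (N : ℝ)) *
                Real.logb 2 ((2 : ℝ) ^ (δ * N)))
          atTop (nhds 0) :=
  ⟨part1aux n d hd D hD, fun δ h0 h1 => limit_aux δ h0 h1⟩
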